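/- arXiv:1810.08204 — 2 statements merged into one kernel-verified Lean document; each statement's English description precedes it below -/
import Mathlib

section
/- Lemma 1 (order independence of θ). Let p₁, …, p_m be plaquettes whose plaquette operators pairwise commute, equivalently b_{p_i}(c + α_{p_j}) · b_{p_j}(c) = b_{p_j}(c + α_{p_i}) · b_{p_i}(c) for all configurations c and all indices i, j. Then for every configuration i, every configuration δ, and every permutation σ of {1, …, m}: θ_δ(i, [p₁, …, p_m]) = θ_δ(i, [p_{σ(1)}, …, p_{σ(m)}]). -/
/-- A plaquette: a flip pattern `α_p` together with a unit-modulus phase function `b_p`. -/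
structure Plaquette (E : Type*) where
  flip : E → ZMod 2
  phase : (E → ZMod 2) → ℂ
  unit_phase : ∀ c, ‖phase c‖ = 1

/-- `theta δ i [p₁, …, p_m] = ∏_k b_{p_k}(i + δ + α_{p₁} + ⋯ + α_{p_{k-1}}) /
    b_{p_k}(i + α_{p₁} + ⋯ + α_{p_{k-1}})` (Eq. (21) of the paper). -/
noncomputable def theta {E : Type*} (δ : E → ZMod 2) :
    (E → ZMod 2) → List (Plaquette E) → ℂ
  | _, [] => 1
  | i, p :: L => (p.phase (i + δ) / p.phase i) * theta δ (i + p.flip) L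

lemma phase_ne_zero {E : Type*} (p : Plaquette E) (c : E → ZMod 2) : p.phase c ≠ 0 := by
  intro h
  have := p.unit_phase c
  rw [h] at this
  simp at this

/-- Lemma 1 (order independence of θ): if the plaquette operators of the plaquettes in the
list `L` pairwise commute — equivalently `b_p(c + α_q) · b_q(c) = b_q(c + α_p) · b_p(c)` for
all configurations `c` — then `θ_δ(i, L)` is invariant under permutations of `L`. -/
theorem theta_perm_invariant {E : Type*} [Fintype E] [DecidableEq E]
    (δ : E → ZMod 2) (L L' : List (Plaquette E)) (hperm : L.Perm L')
    (hcomm : ∀ p ∈ L, ∀ q ∈ L, ∀ c : E → ZMod 2,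
      p.phase (c + q.flip) * q.phase c = q.phase (c + p.flip) * p.phase c)
    (i : E → ZMod 2) :
    theta δ i L = theta δ i L' := by
  induction hperm generalizing i with
  | nil => rfl
  | cons p h ih =>
    simp only [theta]
    rw [ih]
    intro a ha b hb c
    exact hcomm a (List.mem_cons_of_mem p ha) b (List.mem_cons_of_mem p hb) c
  | swap p q l =>
    simp only [theta]
    have h1 := hcomm q (by simp) p (by simp) i
    have h2 := hcomm q (by simp) p (by simp) (i + δ)
    have hq := phase_ne_zero q
    have hp := phase_ne_zero p
    have hflip : i + q.flip + p.flip = i + p.flip + q.flip := by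
      abel
    rw [hflip]
    have key : q.phase (i + δ) / q.phase i * (p.phase (i + q.flip + δ) / p.phase (i + q.flip))
        = p.phase (i + δ) / p.phase i * (q.phase (i + p.flip + δ) / q.phase (i + p.flip)) := by
      have e1 : i + δ + p.flip = i + p.flip + δ := by abel
      have e2 : i + δ + q.flip = i + q.flip + δ := by abel
      rw [e1, e2] at h2
      rw [div_mul_div_comm, div_mul_div_comm]
      congr 1
      · linear_combination -h2
      · linear_combination -h1
    rw [← mul_assoc, ← mul_assoc, key]
  | trans h1 h2 ih1 ih2 =>
    rw [ih1 hcomm i, ih2 _ i]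
    intro a ha b hb c
    exact hcomm a (h1.mem_iff.mpr ha) b (h1.mem_iff.mpr hb) c
end

section
/- Lemma 6 (propagation of the canonical condition). Let P be a finite set of plaquettes with unit-modulus phase functions, δ a configuration, F : (E → ZMod 2) → ℂ with |F(c)| = 1 for all c, and i a fixed configuration. Assume that for every finite list L of plaquettes from P (repetitions allowed): F(i + Σ_{p∈L} α_p) = θ_δ(i, L) · F(i) and F(i + δ + Σ_{p∈L} α_p) = θ_δ(i + δ, L) · F(i + δ). If F(i + δ) = conj(F(i)), then for every finite list L of plaquettes from P: F(i + δ + Σ_{p∈L} α_p) = conj(F(i + Σ_{p∈L} α_p)). -/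

lemma theta_abs {E : Type*} (δ : E → ZMod 2) :
    ∀ (L : List (Plaquette E)) (i : E → ZMod 2), ‖theta δ i L‖ = 1 := by
  intro L
  induction L with
  | nil => intro i; simp [theta]
  | cons p L ih =>
    intro i
    simp [theta, map_mul, map_div₀, p.unit_phase, ih]

lemma theta_delta_inv {E : Type*} (δ : E → ZMod 2) :
    ∀ (L : List (Plaquette E)) (i : E → ZMod 2),
      theta δ (i + δ) L = (theta δ i L)⁻¹ := by
  intro L
  induction L with
  | nil => intro i; simp [theta]
  | cons p L ih =>
    intro i
    have hδδ : i + δ + δ = i := by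
      funext e; simp [CharTwo.add_self_eq_zero, add_assoc]
    have hcomm : i + δ + p.flip = i + p.flip + δ := by
      exact add_right_comm i δ p.flip
    have hb1 : p.phase (i + δ) ≠ 0 := by
      intro h; have := p.unit_phase (i + δ); rw [h] at this; simp at this
    have hb2 : p.phase i ≠ 0 := by
      intro h; have := p.unit_phase i; rw [h] at this; simp at this
    have ht : theta δ (i + p.flip) L ≠ 0 := by
      intro h; have := theta_abs δ L (i + p.flip); rw [h] at this; simp at this
    rw [theta, hδδ, hcomm, ih, theta]
    field_simp


/-- Lemma 6 (propagation of the canonical condition): if `F` satisfies the θ-recursion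
relations at a fixed configuration `i` (and at `i + δ`) for all lists of plaquettes from
`P`, and `F(i + δ) = conj (F i)`, then the canonical condition propagates to the whole
configuration class of `i`. -/
theorem canonical_condition_propagates {E : Type*} [Fintype E] [DecidableEq E]
    (P : Finset (Plaquette E)) (δ : E → ZMod 2)
    (F : (E → ZMod 2) → ℂ) (hF : ∀ c, ‖F c‖ = 1)
    (i : E → ZMod 2)
    (h1 : ∀ L : List (Plaquette E), (∀ p ∈ L, p ∈ P) →
      F (i + (L.map Plaquette.flip).sum) = theta δ i L * F i)
    (h2 : ∀ L : List (Plaquette E), (∀ p ∈ L, p ∈ P) →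
      F (i + δ + (L.map Plaquette.flip).sum) = theta δ (i + δ) L * F (i + δ))
    (hcanon : F (i + δ) = starRingEnd ℂ (F i)) :
    ∀ L : List (Plaquette E), (∀ p ∈ L, p ∈ P) →
      F (i + δ + (L.map Plaquette.flip).sum) =
        starRingEnd ℂ (F (i + (L.map Plaquette.flip).sum)) := by
  intro L hL
  have hθ : F (i + (L.map Plaquette.flip).sum) ≠ 0 := by
    intro h; have := hF (i + (L.map Plaquette.flip).sum); rw [h] at this; simp at this
  rw [h2 L hL, h1 L hL, theta_delta_inv, hcanon, map_mul]
  have habs := theta_abs δ L i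
  rw [Complex.inv_eq_conj habs]
end
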